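/- Let H ∈ k⟦X⟧ and let s ≥ 1 be a natural number. (a) If Φ₁ and Φ₂ both have order 1 and satisfy H∘Φ₁ ≡ Φ₁′·H mod X^{s+1} and H∘Φ₂ ≡ Φ₂′·H mod X^{s+1}, then H∘(Φ₁∘Φ₂) ≡ (Φ₁∘Φ₂)′·H mod X^{s+1}. (b) If Φ has order 1, satisfies H∘Φ ≡ Φ′·H mod X^{s+1}, and Ψ ∈ k⟦X⟧ is the compositional inverse of Φ (Φ∘Ψ = X = Ψ∘Φ), then H∘Ψ ≡ Ψ′·H mod X^{s+1}. -/

import Mathlib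

set_option linter.unusedSectionVars false
set_option linter.unusedVariables false
set_option maxHeartbeats 1000000

open PowerSeries

variable {k : Type*} [Field k] [CharZero k]

/-- Substitution of `g` (with zero constant coefficient) into `f`. -/
noncomputable def comp (f g : PowerSeries k) : PowerSeries k :=
  PowerSeries.mk fun m => ∑ n ∈ Finset.range (m + 1),
    PowerSeries.coeff n f * PowerSeries.coeff m (g ^ n)

lemma coeff_comp (f g : PowerSeries k) (m : ℕ) :
    coeff m (comp f g) = ∑ n ∈ Finset.range (m + 1),
      coeff n f * coeff m (g ^ n) := by
  simp [comp]

lemma constantCoeff_comp (f g : PowerSeries k) :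
    constantCoeff (comp f g) = constantCoeff f := by
  have := coeff_comp f g 0
  simpa [coeff_zero_eq_constantCoeff] using this

lemma comp_X (f : PowerSeries k) : comp f X = f := by
  ext m
  rw [coeff_comp]
  simp only [coeff_X_pow]
  rw [Finset.sum_eq_single m]
  · simp
  · intro b _ hb; simp [hb, Ne.symm hb]
  · intro h; simp at h

lemma comp_sum {ι : Type*} (t : Finset ι) (F : ι → PowerSeries k) (g : PowerSeries k) :
    comp (∑ i ∈ t, F i) g = ∑ i ∈ t, comp (F i) g := by
  ext m
  rw [coeff_comp, map_sum]
  simp only [coeff_comp, map_sum, Finset.sum_mul]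
  rw [Finset.sum_comm]

lemma comp_C_mul (a : k) (f g : PowerSeries k) :
    comp (C a * f) g = C a * comp f g := by
  ext m
  rw [coeff_comp, coeff_C_mul, coeff_comp, Finset.mul_sum]
  refine Finset.sum_congr rfl fun n _ => ?_
  rw [coeff_C_mul]; ring

lemma comp_one (g : PowerSeries k) : comp (1 : PowerSeries k) g = 1 := by
  ext m
  rw [coeff_comp, Finset.sum_eq_single 0]
  · simp
  · intro n hn h0
    simp [coeff_one, h0]
  · simp

lemma comp_C (a : k) (g : PowerSeries k) : comp (C a) g = C a := by
  have h := comp_C_mul a 1 g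
  rw [mul_one, comp_one, mul_one] at h
  exact h

/-- Truncated evaluation sum. -/
noncomputable def E (N : ℕ) (f g : PowerSeries k) : PowerSeries k :=
  ∑ i ∈ Finset.range N, C (coeff i f) * g ^ i

lemma coeff_pow_eq_zero {g : PowerSeries k} (hg : constantCoeff g = 0)
    {m i : ℕ} (h : m < i) : coeff m (g ^ i) = 0 := by
  have : (X : PowerSeries k) ^ i ∣ g ^ i :=
    pow_dvd_pow_of_dvd (X_dvd_iff.2 hg) i
  exact X_pow_dvd_iff.1 this m h

lemma approx (N : ℕ) (f : PowerSeries k) {g : PowerSeries k}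
    (hg : constantCoeff g = 0) :
    (X : PowerSeries k) ^ N ∣ comp f g - E N f g := by
  rw [X_pow_dvd_iff]
  intro m hm
  rw [map_sub, coeff_comp, E, map_sum, sub_eq_zero]
  simp only [coeff_C_mul]
  refine Finset.sum_subset ?_ ?_
  · intro x hx
    rw [Finset.mem_range] at *
    omega
  · intro i _ hi
    rw [Finset.mem_range, not_lt] at hi
    rw [coeff_pow_eq_zero hg (by omega), mul_zero]

lemma E_eq_eval₂ (N : ℕ) (f g : PowerSeries k) :
    E N f g = (trunc N f).eval₂ C g := by
  rw [E, eval₂_trunc_eq_sum_range]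

/-- If two power series agree below degree N, substituting polynomials-truncations
into g gives congruent results. -/
lemma eval₂_congr {N : ℕ} {P Q : Polynomial k} {g : PowerSeries k}
    (hg : constantCoeff g = 0) (h : ∀ d < N, P.coeff d = Q.coeff d) :
    (X : PowerSeries k) ^ N ∣ P.eval₂ C g - Q.eval₂ C g := by
  have hdvd : (Polynomial.X : Polynomial k) ^ N ∣ P - Q := by
    rw [Polynomial.X_pow_dvd_iff]
    intro d hd
    rw [Polynomial.coeff_sub, h d hd, sub_self]
  obtain ⟨R, hR⟩ := hdvd
  have : P.eval₂ C g - Q.eval₂ C g = (P - Q).eval₂ C g := by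
    rw [Polynomial.eval₂_sub]
  rw [this, hR, Polynomial.eval₂_mul, Polynomial.eval₂_X_pow]
  exact Dvd.dvd.mul_right (pow_dvd_pow_of_dvd (X_dvd_iff.2 hg) N) _

lemma comp_congr {N : ℕ} {A B g : PowerSeries k} (hg : constantCoeff g = 0)
    (h : (X : PowerSeries k) ^ N ∣ A - B) :
    (X : PowerSeries k) ^ N ∣ comp A g - comp B g := by
  have hc : ∀ d < N, (trunc N A).coeff d = (trunc N B).coeff d := by
    intro d hd
    rw [coeff_trunc, coeff_trunc, if_pos hd, if_pos hd]
    have := X_pow_dvd_iff.1 h d hd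
    rw [map_sub, sub_eq_zero] at this
    exact this
  have h1 := approx N A hg
  have h2 := approx N B hg
  have h3 := eval₂_congr (N := N) hg hc
  rw [← E_eq_eval₂, ← E_eq_eval₂] at h3
  have : comp A g - comp B g =
      (comp A g - E N A g) - (comp B g - E N B g) + (E N A g - E N B g) := by ring
  rw [this]
  exact dvd_add (dvd_sub h1 h2) h3

lemma dvd_mul_congr {N : ℕ} {a a' b b' : PowerSeries k}
    (h1 : (X : PowerSeries k) ^ N ∣ a - a') (h2 : (X : PowerSeries k) ^ N ∣ b - b') :
    (X : PowerSeries k) ^ N ∣ a * b - a' * b' := by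
  have : a * b - a' * b' = a * (b - b') + (a - a') * b' := by ring
  rw [this]
  exact dvd_add (Dvd.dvd.mul_left h2 a) (Dvd.dvd.mul_right h1 b')

lemma comp_mul {N : ℕ} (A B : PowerSeries k) {g : PowerSeries k}
    (hg : constantCoeff g = 0) :
    (X : PowerSeries k) ^ N ∣ comp (A * B) g - comp A g * comp B g := by
  have h1 := approx N (A * B) hg
  have h2 := approx N A hg
  have h3 := approx N B hg
  have h4 : (X : PowerSeries k) ^ N ∣
      E N (A * B) g - E N A g * E N B g := by
    rw [E_eq_eval₂, E_eq_eval₂, E_eq_eval₂, ← Polynomial.eval₂_mul]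
    apply eval₂_congr hg
    intro d hd
    have key := trunc_trunc_mul_trunc (n := N) A B
    have := congrArg (fun p => Polynomial.coeff p d) key
    rw [coeff_trunc, coeff_trunc, if_pos hd, if_pos hd] at this
    rw [coeff_trunc, if_pos hd, ← this, ← Polynomial.coe_mul, Polynomial.coeff_coe]
  have : comp (A * B) g - comp A g * comp B g =
      (comp (A * B) g - E N (A * B) g)
      + (E N (A * B) g - E N A g * E N B g)
      - ((comp A g - E N A g) * comp B g + E N A g * (comp B g - E N B g)) := by
    ring
  rw [this]
  exact dvd_sub (dvd_add h1 h4)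
    (dvd_add (Dvd.dvd.mul_right h2 _) (Dvd.dvd.mul_left h3 _))


lemma comp_pow {N : ℕ} (A : PowerSeries k) {g : PowerSeries k}
    (hg : constantCoeff g = 0) (n : ℕ) :
    (X : PowerSeries k) ^ N ∣ comp (A ^ n) g - (comp A g) ^ n := by
  induction n with
  | zero => simp [comp_one]
  | succ n ih =>
    have h1 := comp_mul (N := N) (A ^ n) A hg
    have h2 : (X : PowerSeries k) ^ N ∣
        comp (A ^ n) g * comp A g - (comp A g) ^ n * comp A g :=
      dvd_mul_congr ih (by simp)
    rw [pow_succ, pow_succ]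
    rw [← sub_add_sub_cancel _ (comp (A ^ n) g * comp A g) _]
    exact dvd_add h1 h2

lemma comp_assoc_mod {N : ℕ} (f : PowerSeries k) {g₁ g₂ : PowerSeries k}
    (hg₁ : constantCoeff g₁ = 0) (hg₂ : constantCoeff g₂ = 0) :
    (X : PowerSeries k) ^ N ∣ comp f (comp g₁ g₂) - comp (comp f g₁) g₂ := by
  have hcc : constantCoeff (comp g₁ g₂) = 0 := by
    rw [constantCoeff_comp]; exact hg₁
  have h1 := approx N f hcc
  -- comp (comp f g₁) g₂ ≡ comp (E N f g₁) g₂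
  have h2 : (X : PowerSeries k) ^ N ∣ comp (comp f g₁) g₂ - comp (E N f g₁) g₂ :=
    comp_congr hg₂ (approx N f hg₁)
  -- comp (E N f g₁) g₂ = ∑ C a_i * comp (g₁^i) g₂
  have h3 : comp (E N f g₁) g₂ =
      ∑ i ∈ Finset.range N, C (coeff i f) * comp (g₁ ^ i) g₂ := by
    rw [E, comp_sum]
    exact Finset.sum_congr rfl fun i _ => comp_C_mul _ _ _
  -- ∑ C a_i * comp (g₁^i) g₂ ≡ E N f (comp g₁ g₂)
  have h4 : (X : PowerSeries k) ^ N ∣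
      (∑ i ∈ Finset.range N, C (coeff i f) * comp (g₁ ^ i) g₂)
      - E N f (comp g₁ g₂) := by
    rw [E, ← Finset.sum_sub_distrib]
    apply Finset.dvd_sum
    intro i _
    rw [← mul_sub]
    exact Dvd.dvd.mul_left (comp_pow g₁ hg₂ i) _
  rw [h3] at h2
  have : comp f (comp g₁ g₂) - comp (comp f g₁) g₂ =
      (comp f (comp g₁ g₂) - E N f (comp g₁ g₂))
      - (comp (comp f g₁) g₂
          - (∑ i ∈ Finset.range N, C (coeff i f) * comp (g₁ ^ i) g₂))
      - ((∑ i ∈ Finset.range N, C (coeff i f) * comp (g₁ ^ i) g₂)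
          - E N f (comp g₁ g₂)) := by
    ring
  rw [this]
  exact dvd_sub (dvd_sub h1 h2) h4

-- derivative lemmas
lemma coeff_dF (f : PowerSeries k) (n : ℕ) :
    coeff n (derivativeFun f) = coeff (n + 1) f * (n + 1) := coeff_derivative f n

lemma dF_C (a : k) : derivativeFun (C a : PowerSeries k) = 0 := derivative_C

lemma derivativeFun_sub (f g : PowerSeries k) :
    derivativeFun (f - g) = derivativeFun f - derivativeFun g := by
  ext n
  simp [coeff_dF, map_sub, sub_mul]

lemma derivativeFun_pow (g : PowerSeries k) (n : ℕ) :
    derivativeFun (g ^ (n + 1)) = (n + 1 : PowerSeries k) * g ^ n * derivativeFun g := by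
  induction n with
  | zero => simp
  | succ n ih =>
    rw [pow_succ, derivativeFun_mul]
    simp only [smul_eq_mul]
    rw [ih]
    push_cast
    ring

lemma derivativeFun_X_pow (N : ℕ) :
    derivativeFun ((X : PowerSeries k) ^ (N + 1)) =
      (N + 1 : PowerSeries k) * X ^ N := by
  rw [derivativeFun_pow]
  have : derivativeFun (X : PowerSeries k) = 1 := by
    exact derivative_X (R := k)
  rw [this, mul_one]

lemma deriv_dvd {N : ℕ} {D : PowerSeries k}
    (h : (X : PowerSeries k) ^ (N + 1) ∣ D) :
    (X : PowerSeries k) ^ N ∣ derivativeFun D := by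
  obtain ⟨e, rfl⟩ := h
  rw [derivativeFun_mul, smul_eq_mul, smul_eq_mul, derivativeFun_X_pow]
  apply dvd_add
  · exact dvd_mul_of_dvd_left (pow_dvd_pow X (Nat.le_succ N)) _
  · exact Dvd.dvd.mul_left (dvd_mul_left _ _) e


lemma derivativeFun_X' : derivativeFun (X : PowerSeries k) = 1 := by
  exact derivative_X (R := k)

lemma modtrans {N : ℕ} {a b c : PowerSeries k}
    (h1 : (X : PowerSeries k) ^ N ∣ a - b) (h2 : (X : PowerSeries k) ^ N ∣ b - c) :
    (X : PowerSeries k) ^ N ∣ a - c := by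
  have := dvd_add h1 h2
  rwa [sub_add_sub_cancel] at this

lemma modsymm {N : ℕ} {a b : PowerSeries k}
    (h : (X : PowerSeries k) ^ N ∣ a - b) : (X : PowerSeries k) ^ N ∣ b - a := by
  have := h.neg_right
  rwa [neg_sub] at this

lemma derivativeFun_sum {ι : Type*} (t : Finset ι) (F : ι → PowerSeries k) :
    derivativeFun (∑ i ∈ t, F i) = ∑ i ∈ t, derivativeFun (F i) := by
  classical
  induction t using Finset.induction with
  | empty =>
    simp only [Finset.sum_empty]
    ext n; simp [coeff_dF]
  | insert _ _ h ih =>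
    rw [Finset.sum_insert h, Finset.sum_insert h, derivativeFun_add, ih]

lemma derivativeFun_C_mul (a : k) (f : PowerSeries k) :
    derivativeFun (C a * f) = C a * derivativeFun f := by
  rw [derivativeFun_mul, dF_C, smul_eq_mul, smul_eq_mul, mul_zero, add_zero]

lemma derivE (N : ℕ) (f g : PowerSeries k) :
    derivativeFun (E (N + 1) f g) = E N (derivativeFun f) g * derivativeFun g := by
  rw [E, E]
  rw [derivativeFun_sum]
  rw [Finset.sum_range_succ' (fun i => derivativeFun (C ((coeff i) f) * g ^ i)) N]
  rw [Finset.sum_mul]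
  simp only [pow_zero, mul_one, derivativeFun_C_mul, derivativeFun_one, dF_C, mul_zero,
    add_zero, derivativeFun_pow, coeff_dF]
  refine Finset.sum_congr rfl fun i _ => ?_
  rw [map_mul, map_add, map_natCast, map_one]
  push_cast
  ring

theorem chain_mod {N : ℕ} (f : PowerSeries k) {g : PowerSeries k}
    (hg : constantCoeff g = 0) :
    (X : PowerSeries k) ^ N ∣
      derivativeFun (comp f g) - comp (derivativeFun f) g * derivativeFun g := by
  have h2 : (X : PowerSeries k) ^ N ∣
      derivativeFun (comp f g) - derivativeFun (E (N + 1) f g) := by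
    rw [← derivativeFun_sub]
    exact deriv_dvd (approx (N + 1) f hg)
  rw [derivE] at h2
  refine modtrans h2 ?_
  exact dvd_mul_congr (modsymm (approx N (derivativeFun f) hg)) (by simp)

/-- Order-1 solutions of the truncated Aczél–Jabotinsky equation
`H ∘ Φ ≡ Φ′ · H mod X^(s+1)` are closed under substitution and under
compositional inverses. -/
theorem aczel_jabotinsky_truncated_solutions_group (H : PowerSeries k)
    (s : ℕ) (hs : 1 ≤ s) :
    (∀ Φ₁ Φ₂ : PowerSeries k,
      constantCoeff Φ₁ = 0 → coeff 1 Φ₁ ≠ 0 →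
      constantCoeff Φ₂ = 0 → coeff 1 Φ₂ ≠ 0 →
      (X : PowerSeries k) ^ (s + 1) ∣ comp H Φ₁ - derivativeFun Φ₁ * H →
      (X : PowerSeries k) ^ (s + 1) ∣ comp H Φ₂ - derivativeFun Φ₂ * H →
      (X : PowerSeries k) ^ (s + 1) ∣
        comp H (comp Φ₁ Φ₂) - derivativeFun (comp Φ₁ Φ₂) * H) ∧
    (∀ Φ Ψ : PowerSeries k,
      constantCoeff Φ = 0 → coeff 1 Φ ≠ 0 →
      (X : PowerSeries k) ^ (s + 1) ∣ comp H Φ - derivativeFun Φ * H →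
      comp Φ Ψ = X → comp Ψ Φ = X →
      (X : PowerSeries k) ^ (s + 1) ∣ comp H Ψ - derivativeFun Ψ * H) := by
  constructor
  · intro Φ₁ Φ₂ h01 _ h02 _ h1 h2
    have t1 := comp_assoc_mod (N := s + 1) H h01 h02
    have t2 := comp_congr (N := s + 1) h02 h1
    have t3 := comp_mul (N := s + 1) (derivativeFun Φ₁) H h02
    have t4 : (X : PowerSeries k) ^ (s + 1) ∣
        comp (derivativeFun Φ₁) Φ₂ * comp H Φ₂
          - comp (derivativeFun Φ₁) Φ₂ * (derivativeFun Φ₂ * H) :=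
      dvd_mul_congr (by simp) h2
    have e : comp (derivativeFun Φ₁) Φ₂ * (derivativeFun Φ₂ * H)
        = comp (derivativeFun Φ₁) Φ₂ * derivativeFun Φ₂ * H := by ring
    rw [e] at t4
    have t5 : (X : PowerSeries k) ^ (s + 1) ∣
        comp (derivativeFun Φ₁) Φ₂ * derivativeFun Φ₂ * H
          - derivativeFun (comp Φ₁ Φ₂) * H :=
      dvd_mul_congr (modsymm (chain_mod Φ₁ h02)) (by simp)
    exact modtrans (modtrans (modtrans (modtrans t1 t2) t3) t4) t5
  · intro Φ Ψ h0 _ hΦ e1 e2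
    have ccΨ : constantCoeff Ψ = 0 := by
      have := constantCoeff_comp Ψ Φ
      rw [e2] at this
      simpa using this.symm
    set A := comp (derivativeFun Φ) Ψ with hA
    have f1 : (X : PowerSeries k) ^ (s + 1) ∣ H - A * comp H Ψ := by
      have a1 : (X : PowerSeries k) ^ (s + 1) ∣
          comp H (comp Φ Ψ) - comp (comp H Φ) Ψ := comp_assoc_mod H h0 ccΨ
      rw [e1, comp_X] at a1
      have a2 := comp_congr (N := s + 1) ccΨ hΦ
      have a3 := comp_mul (N := s + 1) (derivativeFun Φ) H ccΨ
      exact modtrans (modtrans a1 a2) a3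
    have f2 : (X : PowerSeries k) ^ (s + 1) ∣ 1 - A * derivativeFun Ψ := by
      have := chain_mod (N := s + 1) Φ ccΨ
      rw [e1, derivativeFun_X'] at this
      exact this
    have key : comp H Ψ - derivativeFun Ψ * H =
        comp H Ψ * (1 - A * derivativeFun Ψ)
          - derivativeFun Ψ * (H - A * comp H Ψ) := by ring
    rw [key]
    exact dvd_sub (f2.mul_left _) (f1.mul_left _)
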